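/- Let λ, β, γ > 0 be reals and let G be a finite simple graph on n ≥ 1 vertices that has local (β,γ)-occupancy at fugacity λ. Then (1/n)·Σ_{u∈V(G)} p_u·(β + d_u·γ) ≥ 1, where p_u is the probability that u lies in a random independent set from the hard-core model on G at fugacity λ. -/

import Mathlib

open scoped Classical

/-- The finset of independent sets of a finite simple graph (the empty set counts). -/
noncomputable def indepSets {V : Type*} [Fintype V] (G : SimpleGraph V) : Finset (Finset V) :=
  Finset.univ.filter fun I => ∀ u ∈ I, ∀ v ∈ I, ¬ G.Adj u v

/-- The hard-core partition function `Z_G(λ) = Σ_{I independent} λ^|I|`. -/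
noncomputable def hcZ {V : Type*} [Fintype V] (G : SimpleGraph V) (l : ℝ) : ℝ :=
  ∑ I ∈ indepSets G, l ^ I.card

/-- The probability that vertex `u` lies in a random independent set drawn from the
hard-core model on `G` at fugacity `λ`. -/
noncomputable def hcMarginal {V : Type*} [Fintype V] (G : SimpleGraph V) (l : ℝ) (u : V) : ℝ :=
  (∑ I ∈ (indepSets G).filter (fun I => u ∈ I), l ^ I.card) / hcZ G l

/-- The finset of independent sets of `G` contained in a vertex subset `S`; these are
exactly the independent sets of the induced subgraph `G[S]`. -/
noncomputable def indepSetsIn {V : Type*} [Fintype V] (G : SimpleGraph V) (S : Finset V) :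
    Finset (Finset V) :=
  S.powerset.filter fun I => ∀ u ∈ I, ∀ v ∈ I, ¬ G.Adj u v

/-- The hard-core partition function `Z_F(λ)` of the induced subgraph `F = G[S]`. -/
noncomputable def hcZIn {V : Type*} [Fintype V] (G : SimpleGraph V) (S : Finset V) (l : ℝ) : ℝ :=
  ∑ I ∈ indepSetsIn G S, l ^ I.card

/-- `λ Z_F'(λ) = Σ_{I ⊆ S independent} |I| λ^|I|` for the induced subgraph `F = G[S]`. -/
noncomputable def hcZIn' {V : Type*} [Fintype V] (G : SimpleGraph V) (S : Finset V) (l : ℝ) : ℝ :=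
  ∑ I ∈ indepSetsIn G S, (I.card : ℝ) * l ^ I.card

/-- `G` has local `(β,γ)`-occupancy at fugacity `λ`: for every vertex `u` and every
induced subgraph `F = G[S]` with `S ⊆ N(u)`,
`β (λ/(1+λ)) (1/Z_F(λ)) + γ (λ Z_F'(λ)/Z_F(λ)) ≥ 1`. -/
def LocalOccupancy {V : Type*} [Fintype V] (G : SimpleGraph V) (l β γ : ℝ) : Prop :=
  ∀ u : V, ∀ S ⊆ G.neighborFinset u,
    1 ≤ β * (l / (1 + l)) * (1 / hcZIn G S l) + γ * (hcZIn' G S l / hcZIn G S l)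

section Aux

variable {V : Type*} [Fintype V] (G : SimpleGraph V) (l : ℝ)

lemma mem_indepSets {I : Finset V} :
    I ∈ indepSets G ↔ ∀ u ∈ I, ∀ v ∈ I, ¬ G.Adj u v := by
  simp [indepSets]

lemma mem_indepSetsIn {S I : Finset V} :
    I ∈ indepSetsIn G S ↔ I ⊆ S ∧ ∀ u ∈ I, ∀ v ∈ I, ¬ G.Adj u v := by
  simp [indepSetsIn]

lemma empty_mem_indepSetsIn (S : Finset V) : ∅ ∈ indepSetsIn G S := by
  simp [indepSetsIn]

lemma one_le_hcZIn (hl : 0 < l) (S : Finset V) : 1 ≤ hcZIn G S l := by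
  have h := Finset.single_le_sum (f := fun I : Finset V => l ^ I.card)
    (fun i _ => by positivity) (empty_mem_indepSetsIn G S)
  simpa [hcZIn] using h

lemma hcZIn'_nonneg (hl : 0 < l) (S : Finset V) : 0 ≤ hcZIn' G S l := by
  apply Finset.sum_nonneg; intro i _; positivity

lemma indepSetsIn_empty : indepSetsIn G (∅ : Finset V) = {∅} := by
  ext I
  simp only [indepSetsIn, Finset.mem_filter, Finset.mem_powerset, Finset.subset_empty,
    Finset.mem_singleton]
  constructor
  · rintro ⟨h, -⟩; exact h
  · rintro rfl; simp

lemma hcZIn_empty : hcZIn G (∅ : Finset V) l = 1 := by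
  simp [hcZIn, indepSetsIn_empty]

lemma hcZIn'_empty : hcZIn' G (∅ : Finset V) l = 0 := by
  simp [hcZIn', indepSetsIn_empty]

/-- The key one-variable consequence of local occupancy. -/
lemma key_ineq (hl : 0 < l) {β γ : ℝ} (hloc : LocalOccupancy G l β γ) (u : V)
    (S : Finset V) (hS : S ⊆ G.neighborFinset u) :
    l + hcZIn G S l ≤ β * l + γ * hcZIn' G S l := by
  have hZ1 : 1 ≤ hcZIn G S l := one_le_hcZIn G l hl S
  have hZpos : 0 < hcZIn G S l := by linarith
  have h1 := hloc u S hS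
  have h2 := hloc u ∅ (Finset.empty_subset _)
  rw [hcZIn_empty, hcZIn'_empty] at h2
  have ha : 1 ≤ β * (l / (1 + l)) := by
    simpa using h2
  have h1' : hcZIn G S l ≤ β * (l / (1 + l)) + γ * hcZIn' G S l := by
    have h3 := mul_le_mul_of_nonneg_right h1 hZpos.le
    rw [one_mul] at h3
    calc hcZIn G S l
        ≤ (β * (l / (1 + l)) * (1 / hcZIn G S l) + γ * (hcZIn' G S l / hcZIn G S l)) *
            hcZIn G S l := h3
      _ = β * (l / (1 + l)) + γ * hcZIn' G S l := by field_simp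
  have hl1 : (0:ℝ) < 1 + l := by linarith
  have heq : β * (l / (1 + l)) * (1 + l) = β * l := by field_simp
  have hmul : 1 * l ≤ β * (l / (1 + l)) * l := mul_le_mul_of_nonneg_right ha hl.le
  nlinarith [h1', hmul, heq]

end Aux

section Vertex

variable {V : Type*} [Fintype V] (G : SimpleGraph V) (l : ℝ)

/-- The per-vertex inequality obtained by conditioning on the independent set outside
the closed neighborhood of `u`. -/
lemma vertex_ineq (hl : 0 < l) {β γ : ℝ} (hloc : LocalOccupancy G l β γ) (u : V) :
    0 ≤ ∑ I ∈ indepSets G,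
      (β * (if u ∈ I then (1:ℝ) else 0) + γ * ((I ∩ G.neighborFinset u).card : ℝ) - 1)
        * l ^ I.card := by
  classical
  set f : Finset V → ℝ := fun I =>
    (β * (if u ∈ I then (1:ℝ) else 0) + γ * ((I ∩ G.neighborFinset u).card : ℝ) - 1)
      * l ^ I.card with hf
  set Nc : Finset V := insert u (G.neighborFinset u) with hNc
  rw [← Finset.sum_fiberwise_of_maps_to (g := fun I => I \ Nc)
    (t := (indepSets G).image (fun I => I \ Nc))
    (fun x hx => Finset.mem_image_of_mem _ hx) f]
  apply Finset.sum_nonneg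
  intro J hJ
  obtain ⟨I0, hI0, hJI0⟩ := Finset.mem_image.1 hJ
  have hI0ind : ∀ x ∈ I0, ∀ y ∈ I0, ¬ G.Adj x y := (mem_indepSets G).1 hI0
  have hJind : ∀ x ∈ J, ∀ y ∈ J, ¬ G.Adj x y := by
    intro x hx y hy
    exact hI0ind x (Finset.mem_sdiff.1 (hJI0 ▸ hx)).1 y (Finset.mem_sdiff.1 (hJI0 ▸ hy)).1
  have hJNc : ∀ x ∈ J, x ∉ Nc := by
    intro x hx
    exact (Finset.mem_sdiff.1 (hJI0 ▸ hx)).2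
  have huJ : u ∉ J := fun h => hJNc u h (Finset.mem_insert_self _ _)
  have hJN : ∀ x ∈ J, x ∉ G.neighborFinset u := fun x hx h =>
    hJNc x hx (Finset.mem_insert_of_mem h)
  set S : Finset V := (G.neighborFinset u).filter (fun v => ∀ w ∈ J, ¬ G.Adj v w) with hS
  have hSsub : S ⊆ G.neighborFinset u := Finset.filter_subset _ _
  have huS : u ∉ S := by intro h; have := hSsub h; simp at this
  have huNS : u ∉ G.neighborFinset u := by intro h; simp at h
  -- the fiber over J is in bijection with `insert {u} (indepSetsIn G S)` via `K ↦ J ∪ K`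
  have hfiber : ∑ I ∈ (indepSets G).filter (fun I => I \ Nc = J), f I
      = ∑ K ∈ insert {u} (indepSetsIn G S), f (J ∪ K) := by
    symm
    apply Finset.sum_nbij' (i := fun K => J ∪ K) (j := fun I => I ∩ Nc)
    · -- maps to
      intro K hK
      rw [Finset.mem_filter]
      rcases Finset.mem_insert.1 hK with h | h
      · subst h
        constructor
        · rw [mem_indepSets]
          intro x hx y hy
          rcases Finset.mem_union.1 hx with hx | hx <;>
            rcases Finset.mem_union.1 hy with hy | hy
          · exact hJind x hx y hy
          · rw [Finset.mem_singleton] at hy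
            intro hadj
            rw [hy] at hadj
            exact hJN x hx (by simpa using hadj.symm)
          · rw [Finset.mem_singleton] at hx
            intro hadj
            rw [hx] at hadj
            exact hJN y hy (by simpa using hadj)
          · rw [Finset.mem_singleton] at hx hy
            rw [hx, hy]
            exact G.irrefl
        · ext x
          simp only [Finset.mem_sdiff, Finset.mem_union, Finset.mem_singleton]
          constructor
          · rintro ⟨hx | hx, hNcx⟩
            · exact hx
            · subst hx; exact absurd (Finset.mem_insert_self _ _) hNcx
          · intro hx; exact ⟨Or.inl hx, hJNc x hx⟩
      · obtain ⟨hKS, hKind⟩ := (mem_indepSetsIn G).1 h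
        constructor
        · rw [mem_indepSets]
          intro x hx y hy
          rcases Finset.mem_union.1 hx with hx | hx <;>
            rcases Finset.mem_union.1 hy with hy | hy
          · exact hJind x hx y hy
          · intro hadj
            exact (Finset.mem_filter.1 (hKS hy)).2 x hx hadj.symm
          · intro hadj
            exact (Finset.mem_filter.1 (hKS hx)).2 y hy hadj
            
          · exact hKind x hx y hy
        · ext x
          simp only [Finset.mem_sdiff, Finset.mem_union]
          constructor
          · rintro ⟨hx | hx, hNcx⟩
            · exact hx
            · exact absurd (Finset.mem_insert_of_mem (hSsub (hKS hx))) hNcx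
          · intro hx; exact ⟨Or.inl hx, hJNc x hx⟩
    · -- reverse maps to
      intro I hI
      obtain ⟨hIi, hIJ⟩ := Finset.mem_filter.1 hI
      have hIind : ∀ x ∈ I, ∀ y ∈ I, ¬ G.Adj x y := (mem_indepSets G).1 hIi
      by_cases hu : u ∈ I
      · have : I ∩ Nc = {u} := by
          ext x
          simp only [Finset.mem_inter, Finset.mem_singleton, hNc, Finset.mem_insert]
          constructor
          · rintro ⟨hxI, hx | hx⟩
            · exact hx
            · exact absurd (by simpa using hx : G.Adj u x) (hIind u hu x hxI)
          · rintro rfl; exact ⟨hu, Or.inl rfl⟩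
        rw [this]
        exact Finset.mem_insert_self _ _
      · apply Finset.mem_insert_of_mem
        rw [mem_indepSetsIn]
        constructor
        · intro x hx
          obtain ⟨hxI, hxNc⟩ := Finset.mem_inter.1 hx
          have hxN : x ∈ G.neighborFinset u := by
            rcases Finset.mem_insert.1 hxNc with h | h
            · exact absurd (h ▸ hxI) hu
            · exact h
          rw [hS, Finset.mem_filter]
          refine ⟨hxN, ?_⟩
          intro w hw
          have hwI : w ∈ I := (Finset.mem_sdiff.1 (hIJ ▸ hw)).1
          exact hIind x hxI w hwI
        · intro x hx y hy
          exact hIind x (Finset.mem_inter.1 hx).1 y (Finset.mem_inter.1 hy).1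
    · -- left inverse
      intro K hK
      have hKNc : K ⊆ Nc := by
        rcases Finset.mem_insert.1 hK with h | h
        · subst h
          intro x hx
          rw [Finset.mem_singleton] at hx; subst hx
          exact Finset.mem_insert_self _ _
        · intro x hx
          have := ((mem_indepSetsIn G).1 h).1 hx
          exact Finset.mem_insert_of_mem (hSsub this)
      ext x
      simp only [Finset.mem_inter, Finset.mem_union]
      constructor
      · rintro ⟨hx | hx, hNcx⟩
        · exact absurd hNcx (hJNc x hx)
        · exact hx
      · intro hx; exact ⟨Or.inr hx, hKNc hx⟩
    · -- right inverse
      intro I hI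
      obtain ⟨-, hIJ⟩ := Finset.mem_filter.1 hI
      ext x
      simp only [Finset.mem_union, Finset.mem_inter]
      constructor
      · rintro (hx | hx)
        · exact (Finset.mem_sdiff.1 (hIJ ▸ hx)).1
        · exact hx.1
      · intro hx
        by_cases h : x ∈ Nc
        · exact Or.inr ⟨hx, h⟩
        · exact Or.inl (hIJ ▸ Finset.mem_sdiff.2 ⟨hx, h⟩)
    · intro K _; rfl
  rw [hfiber]
  have husing : ({u} : Finset V) ∉ indepSetsIn G S := by
    intro h
    exact huS (((mem_indepSetsIn G).1 h).1 (Finset.mem_singleton_self u))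
  rw [Finset.sum_insert husing]
  -- compute the two pieces
  have hterm1 : f (J ∪ {u}) = (β - 1) * l ^ (J.card + 1) := by
    have hu : u ∈ J ∪ {u} := Finset.mem_union_right _ (Finset.mem_singleton_self u)
    have hint : (J ∪ {u}) ∩ G.neighborFinset u = ∅ := by
      ext x
      simp only [Finset.mem_inter, Finset.mem_union, Finset.mem_singleton,
        Finset.notMem_empty, iff_false]
      rintro ⟨hx | hx, hxN⟩
      · exact hJN x hx hxN
      · subst hx; exact huNS hxN
    have hcard : (J ∪ {u}).card = J.card + 1 := by
      rw [Finset.card_union_of_disjoint (by simpa using huJ)]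
      simp
    rw [hf]
    simp only [hu, if_pos, hint, hcard]
    simp
  have hterm2 : ∀ K ∈ indepSetsIn G S,
      f (J ∪ K) = (γ * (K.card : ℝ) - 1) * l ^ K.card * l ^ J.card := by
    intro K hK
    have hKS : K ⊆ S := ((mem_indepSetsIn G).1 hK).1
    have hKN : K ⊆ G.neighborFinset u := hKS.trans hSsub
    have huK : u ∉ J ∪ K := by
      rw [Finset.mem_union]
      rintro (h | h)
      · exact huJ h
      · exact huNS (hKN h)
    have hint : (J ∪ K) ∩ G.neighborFinset u = K := by
      ext x
      simp only [Finset.mem_inter, Finset.mem_union]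
      constructor
      · rintro ⟨hx | hx, hxN⟩
        · exact absurd hxN (hJN x hx)
        · exact hx
      · intro hx; exact ⟨Or.inr hx, hKN hx⟩
    have hdisj : Disjoint J K := by
      rw [Finset.disjoint_left]
      intro x hx hxK
      exact hJN x hx (hKN hxK)
    have hcard : (J ∪ K).card = J.card + K.card := Finset.card_union_of_disjoint hdisj
    rw [hf]
    simp only [huK, if_neg, hint, hcard, if_false]
    rw [pow_add]
    ring
  rw [Finset.sum_congr rfl hterm2]
  have hsum : ∑ K ∈ indepSetsIn G S, (γ * (K.card : ℝ) - 1) * l ^ K.card * l ^ J.card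
      = (γ * hcZIn' G S l - hcZIn G S l) * l ^ J.card := by
    rw [hcZIn', hcZIn, Finset.mul_sum, ← Finset.sum_sub_distrib, Finset.sum_mul]
    exact Finset.sum_congr rfl fun K _ => by ring
  rw [hterm1, hsum]
  have hkey := key_ineq G l hl hloc u S hSsub
  have hpow : (0:ℝ) < l ^ J.card := by positivity
  have : (β - 1) * l ^ (J.card + 1) + (γ * hcZIn' G S l - hcZIn G S l) * l ^ J.card
      = ((β * l + γ * hcZIn' G S l) - (l + hcZIn G S l)) * l ^ J.card := by
    rw [pow_succ]; ring
  rw [this]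
  exact mul_nonneg (by linarith) hpow.le

end Vertex

theorem stmt11 {V : Type*} [Fintype V] (G : SimpleGraph V) (hn : 1 ≤ Fintype.card V)
    (l β γ : ℝ) (hl : 0 < l) (hβ : 0 < β) (hγ : 0 < γ)
    (hloc : LocalOccupancy G l β γ) :
    1 ≤ (1 / (Fintype.card V : ℝ)) *
        ∑ u : V, hcMarginal G l u * (β + (G.degree u : ℝ) * γ) := by
  classical
  have hZ1 : 1 ≤ hcZ G l := by
    have h := Finset.single_le_sum (f := fun I : Finset V => l ^ I.card)
      (fun i _ => by positivity) (show (∅ : Finset V) ∈ indepSets G by simp [indepSets])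
    simpa [hcZ] using h
  have hZpos : 0 < hcZ G l := lt_of_lt_of_le one_pos hZ1
  set A : V → ℝ := fun u => ∑ I ∈ (indepSets G).filter (fun I => u ∈ I), l ^ I.card with hA
  have hv : ∀ u : V, hcZ G l ≤ β * A u
      + γ * ∑ I ∈ indepSets G, ((I ∩ G.neighborFinset u).card : ℝ) * l ^ I.card := by
    intro u
    have h := vertex_ineq G l hl hloc u
    have hexp : ∑ I ∈ indepSets G,
        (β * (if u ∈ I then (1:ℝ) else 0) + γ * ((I ∩ G.neighborFinset u).card : ℝ) - 1)
          * l ^ I.card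
        = β * A u
          + γ * (∑ I ∈ indepSets G, ((I ∩ G.neighborFinset u).card : ℝ) * l ^ I.card)
          - hcZ G l := by
      have h1 : ∀ I ∈ indepSets G,
          (β * (if u ∈ I then (1:ℝ) else 0) + γ * ((I ∩ G.neighborFinset u).card : ℝ) - 1)
            * l ^ I.card
          = β * (if u ∈ I then l ^ I.card else 0)
            + γ * (((I ∩ G.neighborFinset u).card : ℝ) * l ^ I.card) - l ^ I.card := by
        intro I _
        split <;> ring
      rw [Finset.sum_congr rfl h1, Finset.sum_sub_distrib, Finset.sum_add_distrib,
        ← Finset.mul_sum, ← Finset.mul_sum, ← Finset.sum_filter]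
      simp only [hA, hcZ]
    rw [hexp] at h
    linarith
  have hB : ∀ u : V,
      ∑ I ∈ indepSets G, ((I ∩ G.neighborFinset u).card : ℝ) * l ^ I.card
      = ∑ v ∈ G.neighborFinset u, A v := by
    intro u
    have h1 : ∀ I ∈ indepSets G, ((I ∩ G.neighborFinset u).card : ℝ) * l ^ I.card
        = ∑ v ∈ G.neighborFinset u, (if v ∈ I then l ^ I.card else 0) := by
      intro I _
      rw [Finset.sum_ite_mem, Finset.sum_const, Finset.inter_comm, nsmul_eq_mul]
    rw [Finset.sum_congr rfl h1, Finset.sum_comm]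
    apply Finset.sum_congr rfl
    intro v _
    rw [← Finset.sum_filter]
  have hdeg : ∑ u : V, ∑ v ∈ G.neighborFinset u, A v
      = ∑ v : V, (G.degree v : ℝ) * A v := by
    have h1 : ∀ u : V, ∑ v ∈ G.neighborFinset u, A v
        = ∑ v : V, (if v ∈ G.neighborFinset u then A v else 0) := by
      intro u
      rw [Finset.sum_ite_mem, Finset.univ_inter]
    rw [Finset.sum_congr rfl (fun u _ => h1 u), Finset.sum_comm]
    apply Finset.sum_congr rfl
    intro v _
    have h2 : ∀ u : V, v ∈ G.neighborFinset u ↔ u ∈ G.neighborFinset v := by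
      intro u
      rw [SimpleGraph.mem_neighborFinset, SimpleGraph.mem_neighborFinset, G.adj_comm]
    rw [Finset.sum_congr rfl (fun u _ => by rw [if_congr (h2 u) rfl rfl]),
      ← Finset.sum_filter, Finset.sum_const, Finset.filter_mem_eq_inter, Finset.univ_inter,
      nsmul_eq_mul, SimpleGraph.card_neighborFinset_eq_degree]
  have hmain : (Fintype.card V : ℝ) * hcZ G l
      ≤ ∑ u : V, A u * (β + (G.degree u : ℝ) * γ) := by
    have h1 : ∑ u : V, hcZ G l ≤ ∑ u : V, (β * A u
        + γ * ∑ I ∈ indepSets G, ((I ∩ G.neighborFinset u).card : ℝ) * l ^ I.card) :=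
      Finset.sum_le_sum fun u _ => hv u
    rw [Finset.sum_const, Finset.card_univ, nsmul_eq_mul] at h1
    refine h1.trans_eq ?_
    rw [Finset.sum_add_distrib, ← Finset.mul_sum, ← Finset.mul_sum,
      Finset.sum_congr rfl (fun u _ => hB u), hdeg,
      Finset.mul_sum, Finset.mul_sum, ← Finset.sum_add_distrib]
    exact Finset.sum_congr rfl fun u _ => by ring
  simp only [hcMarginal]
  have hrw : ∀ u : V,
      (∑ I ∈ (indepSets G).filter (fun I => u ∈ I), l ^ I.card) / hcZ G l
        * (β + (G.degree u : ℝ) * γ)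
      = A u * (β + (G.degree u : ℝ) * γ) / hcZ G l := by
    intro u
    simp only [hA]
    ring
  rw [Finset.sum_congr rfl fun u _ => hrw u, ← Finset.sum_div]
  have hn0 : (0:ℝ) < (Fintype.card V : ℝ) := by exact_mod_cast hn
  rw [one_div, ← div_eq_inv_mul, div_div, le_div_iff₀ (by positivity), one_mul, mul_comm]
  exact hmain
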